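/- Fix ε ≠ 0. For every natural number N and every r > 0, Z_N(−tanh r) = ε^N · (sinh(2r)/2)^{1/(2ε)} · f^{(N)}(r), where f : (0, ∞) → ℝ is the function f(r) = (sinh(2r)/2)^{−1/(2ε)}, f^{(N)} denotes its N-th derivative, and the real powers of the positive quantity sinh(2r)/2 are taken. -/

import Mathlib

/-- The discrete stochastic process with memory: binomial transfer probabilities
with coupling `ε`. -/
noncomputable def P (ε : ℝ) : ℕ → ℤ → ℝ
  | 0, x => if x = 0 then 1 else 0
  | n + 1, x =>
      P ε n (x + 1) * (1 / 2 - ((x : ℝ) + 1) * ε) +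
      P ε n (x - 1) * (1 / 2 + ((x : ℝ) - 1) * ε)

/-- The generating function `Z_n(q) = Σ_{x ∈ ℤ} P(n, x) · q^x` (integer powers). -/
noncomputable def Z (ε : ℝ) (n : ℕ) (q : ℝ) : ℝ := ∑' x : ℤ, P ε n x * q ^ x


lemma P_support (ε : ℝ) : ∀ n : ℕ, ∀ x : ℤ, (n : ℤ) < |x| → P ε n x = 0 := by
  intro n
  induction n with
  | zero =>
      intro x hx
      rw [lt_abs] at hx
      have : x ≠ 0 := by omega
      simp [P, this]
  | succ n ih =>
      intro x hx
      rw [lt_abs] at hx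
      push_cast at hx
      have h1 : (n : ℤ) < |x + 1| := by rw [lt_abs]; omega
      have h2 : (n : ℤ) < |x - 1| := by rw [lt_abs]; omega
      simp [P, ih _ h1, ih _ h2]

lemma P_zero_of_not_mem (ε : ℝ) (n : ℕ) (x : ℤ) (hx : x ∉ Finset.Icc (-(n:ℤ)) n) :
    P ε n x = 0 := by
  apply P_support
  simp [Finset.mem_Icc] at hx
  rw [lt_abs]
  omega

lemma Zfin (ε : ℝ) (n : ℕ) (q : ℝ) :
    Z ε n q = ∑ x ∈ Finset.Icc (-(n:ℤ)) n, P ε n x * q ^ x :=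
  tsum_eq_sum (fun x hx => by rw [P_zero_of_not_mem ε n x hx, zero_mul])

lemma P_summable (ε : ℝ) (n : ℕ) (g : ℤ → ℝ) (h : ∀ x, P ε n x = 0 → g x = 0) :
    Summable g :=
  summable_of_ne_finset_zero (s := Finset.Icc (-(n:ℤ)) n)
    (fun x hx => h x (P_zero_of_not_mem ε n x hx))

lemma Z_rec (ε q : ℝ) (hq : q ≠ 0) (n : ℕ) :
    Z ε (n+1) q = (q^2+1)/(2*q) * Z ε n q
      + ε * ∑' x : ℤ, P ε n x * (x : ℝ) * (q ^ (x+1) - q ^ (x-1)) := by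
  have hA : Summable (fun x : ℤ => P ε n (x+1) * (1/2 - ((x:ℝ)+1) * ε) * q ^ x) := by
    apply summable_of_ne_finset_zero (s := Finset.Icc (-(n:ℤ)-1) ((n:ℤ)+1))
    intro x hx
    have : P ε n (x+1) = 0 := by
      apply P_support
      simp [Finset.mem_Icc] at hx
      rw [lt_abs]; omega
    simp [this]
  have hB : Summable (fun x : ℤ => P ε n (x-1) * (1/2 + ((x:ℝ)-1) * ε) * q ^ x) := by
    apply summable_of_ne_finset_zero (s := Finset.Icc (-(n:ℤ)-1) ((n:ℤ)+1))
    intro x hx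
    have : P ε n (x-1) = 0 := by
      apply P_support
      simp [Finset.mem_Icc] at hx
      rw [lt_abs]; omega
    simp [this]
  have hC : Summable (fun x : ℤ => P ε n x * (1/2 - (x:ℝ) * ε) * q ^ (x-1)) :=
    P_summable ε n _ (fun x hP => by rw [hP, zero_mul, zero_mul])
  have hD : Summable (fun x : ℤ => P ε n x * (1/2 + (x:ℝ) * ε) * q ^ (x+1)) :=
    P_summable ε n _ (fun x hP => by rw [hP, zero_mul, zero_mul])
  have hE : Summable (fun x : ℤ => (q^2+1)/(2*q) * (P ε n x * q ^ x)) :=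
    P_summable ε n _ (fun x hP => by rw [hP, zero_mul, mul_zero])
  have hF : Summable (fun x : ℤ => ε * (P ε n x * (x : ℝ) * (q ^ (x+1) - q ^ (x-1)))) :=
    P_summable ε n _ (fun x hP => by rw [hP, zero_mul, zero_mul, mul_zero])
  have step1 : Z ε (n+1) q
      = (∑' x : ℤ, P ε n (x+1) * (1/2 - ((x:ℝ)+1) * ε) * q ^ x)
        + ∑' x : ℤ, P ε n (x-1) * (1/2 + ((x:ℝ)-1) * ε) * q ^ x := by
    rw [Z, ← Summable.tsum_add hA hB]
    congr 1
    funext x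
    show (P ε n (x + 1) * (1 / 2 - ((x : ℝ) + 1) * ε) +
      P ε n (x - 1) * (1 / 2 + ((x : ℝ) - 1) * ε)) * q ^ x = _
    ring
  have reA : (∑' x : ℤ, P ε n (x+1) * (1/2 - ((x:ℝ)+1) * ε) * q ^ x)
      = ∑' y : ℤ, P ε n y * (1/2 - (y:ℝ) * ε) * q ^ (y-1) := by
    rw [← (Equiv.subRight (1:ℤ)).tsum_eq
      (fun x : ℤ => P ε n (x+1) * (1/2 - ((x:ℝ)+1) * ε) * q ^ x)]
    congr 1
    funext y
    simp only [Equiv.subRight_apply, sub_add_cancel]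
    push_cast
    ring_nf
  have reB : (∑' x : ℤ, P ε n (x-1) * (1/2 + ((x:ℝ)-1) * ε) * q ^ x)
      = ∑' y : ℤ, P ε n y * (1/2 + (y:ℝ) * ε) * q ^ (y+1) := by
    rw [← (Equiv.addRight (1:ℤ)).tsum_eq
      (fun x : ℤ => P ε n (x-1) * (1/2 + ((x:ℝ)-1) * ε) * q ^ x)]
    congr 1
    funext y
    simp only [Equiv.coe_addRight, add_sub_cancel_right]
    push_cast
    ring_nf
  rw [step1, reA, reB, ← Summable.tsum_add hC hD, Z, ← tsum_mul_left, ← tsum_mul_left,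
    ← Summable.tsum_add hE hF]
  congr 1
  funext y
  rw [zpow_add_one₀ hq, zpow_sub_one₀ hq]
  field_simp
  ring

lemma hasDerivAt_neg_tanh (s : ℝ) :
    HasDerivAt (fun w : ℝ => -Real.tanh w) ((-Real.tanh s)^2 - 1) s := by
  have hc : Real.cosh s ≠ 0 := (Real.cosh_pos s).ne'
  simp only [Real.tanh_eq_sinh_div_cosh]
  have h : HasDerivAt (fun w : ℝ => -(Real.sinh w / Real.cosh w)) _ s := ((Real.hasDerivAt_sinh s).div (Real.hasDerivAt_cosh s) hc).neg
  convert h using 1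
  have := Real.cosh_sq_sub_sinh_sq s
  field_simp
  nlinarith [this]

lemma hasDerivAt_Zcomp (ε : ℝ) (n : ℕ) (r : ℝ) (hq : -Real.tanh r ≠ 0) :
    HasDerivAt (fun s : ℝ => Z ε n (-Real.tanh s))
      (∑ x ∈ Finset.Icc (-(n:ℤ)) n,
        P ε n x * ((x:ℝ) * (-Real.tanh r) ^ (x-1) * ((-Real.tanh r)^2 - 1))) r := by
  simp only [Zfin]
  apply HasDerivAt.fun_sum
  intro x _
  exact (((hasDerivAt_zpow x _ (Or.inl hq)).comp r (hasDerivAt_neg_tanh r)).const_mul _)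


/-- for `ε ≠ 0` and `r > 0`,
`Z_N(−tanh r) = ε^N · (sinh(2r)/2)^{1/(2ε)} · f^{(N)}(r)`
where `f(r) = (sinh(2r)/2)^{−1/(2ε)}` (real powers). -/
theorem Z_closed_derivative_form (ε : ℝ) (hε : ε ≠ 0) (N : ℕ) (r : ℝ) (hr : 0 < r) :
    Z ε N (-Real.tanh r) =
      ε ^ N * (Real.sinh (2 * r) / 2) ^ (1 / (2 * ε)) *
        iteratedDeriv N (fun s : ℝ => (Real.sinh (2 * s) / 2) ^ (-(1 / (2 * ε)))) r := by
  induction N generalizing r with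
  | zero =>
      have hu : 0 < Real.sinh (2 * r) / 2 := by
        have : 0 < Real.sinh (2 * r) := Real.sinh_pos_iff.mpr (by linarith)
        linarith
      have hZ0 : Z ε 0 (-Real.tanh r) = 1 := by
        rw [Z, tsum_eq_single 0 (fun b hb => by simp [P, hb])]
        simp [P]
      rw [hZ0, iteratedDeriv_zero, pow_zero, one_mul, ← Real.rpow_add hu]
      simp
  | succ n ih =>
      have hsh : 0 < Real.sinh (2 * r) := Real.sinh_pos_iff.mpr (by linarith)
      have hu : 0 < Real.sinh (2 * r) / 2 := by linarith
      have ht : 0 < Real.tanh r := by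
        rw [Real.tanh_eq_sinh_div_cosh]
        exact div_pos (Real.sinh_pos_iff.mpr hr) (Real.cosh_pos r)
      have hq : -Real.tanh r ≠ 0 := by simp; exact ht.ne'
      have hεn : (ε : ℝ) ^ n ≠ 0 := pow_ne_zero n hε
      set q : ℝ := -Real.tanh r with hqdef
      set c : ℝ := 1 / (2 * ε) with hcdef
      set Zn : ℝ := Z ε n q with hZn
      set D : ℝ := ∑ x ∈ Finset.Icc (-(n:ℤ)) n,
        P ε n x * ((x:ℝ) * q ^ (x-1) * (q^2 - 1)) with hDdef
      -- the recurrence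
      have key1 : Z ε (n+1) q = (q^2+1)/(2*q) * Zn + ε * D := by
        rw [Z_rec ε q hq n]
        congr 1
        congr 1
        rw [tsum_eq_sum (s := Finset.Icc (-(n:ℤ)) n)
          (fun x hx => by rw [P_zero_of_not_mem ε n x hx, zero_mul, zero_mul])]
        apply Finset.sum_congr rfl
        intro x _
        rw [zpow_add_one₀ hq, zpow_sub_one₀ hq]
        field_simp
      -- the derivative of the composed Z
      have hG : HasDerivAt (fun s : ℝ => Z ε n (-Real.tanh s)) D r := hasDerivAt_Zcomp ε n r hq
      -- derivative of sinh(2s)/2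
      have hU : HasDerivAt (fun s : ℝ => Real.sinh (2 * s) / 2) (Real.cosh (2 * r)) r := by
        have h2 : HasDerivAt (fun s : ℝ => 2 * s) 2 r := by
          simpa using (hasDerivAt_id r).const_mul (2:ℝ)
        have := ((Real.hasDerivAt_sinh (2 * r)).comp r h2).div_const 2
        simpa using this
      have hune : Real.sinh (2 * r) / 2 ≠ 0 := hu.ne'
      have hRp : HasDerivAt (fun s : ℝ => (Real.sinh (2 * s) / 2) ^ (-c))
          (Real.cosh (2 * r) * (-c) * (Real.sinh (2 * r) / 2) ^ (-c - 1)) r :=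
        hU.rpow_const (Or.inl hune)
      have hProd : HasDerivAt
          (fun s : ℝ => (ε ^ n)⁻¹ * ((Real.sinh (2 * s) / 2) ^ (-c) * Z ε n (-Real.tanh s)))
          ((ε ^ n)⁻¹ * ((Real.cosh (2 * r) * (-c) * (Real.sinh (2 * r) / 2) ^ (-c - 1)) * Zn
            + (Real.sinh (2 * r) / 2) ^ (-c) * D)) r :=
        (hRp.mul hG).const_mul _
      have hEv : iteratedDeriv n (fun s : ℝ => (Real.sinh (2 * s) / 2) ^ (-c))
          =ᶠ[nhds r] fun s : ℝ =>
            (ε ^ n)⁻¹ * ((Real.sinh (2 * s) / 2) ^ (-c) * Z ε n (-Real.tanh s)) := by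
        filter_upwards [Ioi_mem_nhds hr] with s hs
        have hus : 0 < Real.sinh (2 * s) / 2 := by
          have : 0 < Real.sinh (2 * s) := Real.sinh_pos_iff.mpr (by
            simp only [Set.mem_Ioi] at hs; linarith)
          linarith
        have h := ih s (by simpa using hs)
        rw [h, Real.rpow_neg hus.le]
        have hucs : (Real.sinh (2 * s) / 2) ^ c ≠ 0 := (Real.rpow_pos_of_pos hus c).ne'
        field_simp
      have hIt : iteratedDeriv (n+1) (fun s : ℝ => (Real.sinh (2 * s) / 2) ^ (-c)) r
          = (ε ^ n)⁻¹ * ((Real.cosh (2 * r) * (-c) * (Real.sinh (2 * r) / 2) ^ (-c - 1)) * Zn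
            + (Real.sinh (2 * r) / 2) ^ (-c) * D) := by
        rw [iteratedDeriv_succ, hEv.deriv_eq, hProd.deriv]
      -- rpow algebra
      have e2 : (Real.sinh (2 * r) / 2) ^ c * (Real.sinh (2 * r) / 2) ^ (-c) = 1 := by
        rw [← Real.rpow_add hu]; simp
      have e3 : (Real.sinh (2 * r) / 2) ^ c * (Real.sinh (2 * r) / 2) ^ (-c - 1)
          = (Real.sinh (2 * r) / 2)⁻¹ := by
        rw [← Real.rpow_add hu, show c + (-c - 1) = (-1 : ℝ) by ring]
        rw [show (-1 : ℝ) = ((-1 : ℤ) : ℝ) by simp, Real.rpow_intCast]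
        simp
      have hε1 : ε ^ (n+1) * (ε ^ n)⁻¹ = ε := by
        rw [pow_succ]; field_simp
      have hIt2 : ε ^ (n+1) * (Real.sinh (2 * r) / 2) ^ c *
          iteratedDeriv (n+1) (fun s : ℝ => (Real.sinh (2 * s) / 2) ^ (-c)) r
          = -(Real.cosh (2 * r) / Real.sinh (2 * r)) * Zn + ε * D := by
        rw [hIt]
        have expand : ε ^ (n+1) * (Real.sinh (2 * r) / 2) ^ c *
            ((ε ^ n)⁻¹ * ((Real.cosh (2 * r) * (-c) * (Real.sinh (2 * r) / 2) ^ (-c - 1)) * Zn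
              + (Real.sinh (2 * r) / 2) ^ (-c) * D))
            = (ε ^ (n+1) * (ε ^ n)⁻¹) *
              (Real.cosh (2 * r) * (-c) *
                ((Real.sinh (2 * r) / 2) ^ c * (Real.sinh (2 * r) / 2) ^ (-c - 1)) * Zn
              + ((Real.sinh (2 * r) / 2) ^ c * (Real.sinh (2 * r) / 2) ^ (-c)) * D) := by
          ring
        rw [expand, e2, e3, hε1, hcdef]
        field_simp
      have hkey : (q^2+1)/(2*q) = -(Real.cosh (2 * r) / Real.sinh (2 * r)) := by
        rw [hqdef, Real.cosh_two_mul, Real.sinh_two_mul, Real.tanh_eq_sinh_div_cosh]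
        have hC : Real.cosh r ≠ 0 := (Real.cosh_pos r).ne'
        have hS : Real.sinh r ≠ 0 := (Real.sinh_pos_iff.mpr hr).ne'
        field_simp
        ring
      rw [key1, hIt2, hkey]
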